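/- Let d ≥ 1 be an integer and θ ∈ ℂ a primitive d-th root of unity. Then for all λ, μ ∈ ℂ: min_{σ ∈ S_d} ((1/d) Σ_{i=1}^d |θ^i λ − θ^{σ(i)} μ|²)^{1/2} = min_{1≤j≤d} |λ − θ^j μ|, where S_d is the symmetric group on {1,…,d}. In particular, the map λ ↦ (θλ, θ²λ, …, θ^d λ) induces a map into unordered d-tuples that is 1-Lipschitz with respect to the distance 𝐝. -/

import Mathlib

set_option maxHeartbeats 1000000


theorem stmt15 (d : ℕ) (hd : 1 ≤ d) (θ : ℂ) (hθd : θ ^ d = 1)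
    (hθprim : ∀ j : ℕ, 0 < j → j < d → θ ^ j ≠ 1) (lam mu : ℂ) :
    (⨅ σ : Equiv.Perm (Fin d), Real.sqrt ((1 / (d : ℝ)) * ∑ i : Fin d,
        ‖θ ^ ((i : ℕ) + 1) * lam - θ ^ (((σ i : Fin d) : ℕ) + 1) * mu‖ ^ 2)) =
      (⨅ j : Fin d, ‖lam - θ ^ ((j : ℕ) + 1) * mu‖) ∧
    (⨅ σ : Equiv.Perm (Fin d), Real.sqrt ((1 / (d : ℝ)) * ∑ i : Fin d,
        ‖θ ^ ((i : ℕ) + 1) * lam - θ ^ (((σ i : Fin d) : ℕ) + 1) * mu‖ ^ 2)) ≤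
      ‖lam - mu‖ := by
  have dpos : 0 < d := hd
  haveI : NeZero d := ⟨by omega⟩
  have habs : ‖θ‖ = 1 := by
    exact Complex.norm_eq_one_of_pow_eq_one hθd (by omega)
  have hper : ∀ n : ℕ, θ ^ n = θ ^ (n % d) := by
    intro n
    conv_lhs => rw [← Nat.div_add_mod n d]
    rw [pow_add, pow_mul, hθd, one_pow, one_mul]
  have hpow : ∀ a b : ℕ, a % d = b % d → θ ^ a = θ ^ b := by
    intro a b h; rw [hper a, hper b, h]
  -- key : rewriting a term as |lam - θ^(e+1) mu|
  have hkey : ∀ (i e : Fin d) (k : ℕ), (((i : ℕ) + 1) + ((e : ℕ) + 1)) % d = (k + 1) % d →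
      ‖θ ^ ((i : ℕ) + 1) * lam - θ ^ (k + 1) * mu‖
        = ‖lam - θ ^ ((e : ℕ) + 1) * mu‖ := by
    intro i e k h
    have h2 : θ ^ (k + 1) = θ ^ ((i:ℕ)+1) * θ ^ ((e:ℕ)+1) := by
      rw [← pow_add]; exact (hpow _ _ h).symm
    rw [h2, mul_assoc, ← mul_sub, norm_mul, norm_pow, habs, one_pow, one_mul]
  have hmod1 : ∀ i k : ℕ, i < d → ((i+1) + ((k + d - i - 1) % d + 1)) % d = (k+1) % d := by
    intro i k hi
    have h2 : (i+1) + ((k + d - i - 1) % d + 1) ≡ (i+1) + ((k + d - i - 1) + 1) [MOD d] :=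
      Nat.ModEq.add_left _ (Nat.ModEq.add_right _ (Nat.mod_modEq _ _))
    have h3 : (i+1) + ((k + d - i - 1) + 1) = (k+1) + d := by omega
    have h4 : (k+1) + d ≡ (k+1) [MOD d] := Nat.add_mod_right (k+1) d
    exact h2.trans (h3 ▸ h4)
  have hmod2 : ∀ i j : ℕ, ((i+1) + (j+1)) % d = ((i + (j+1) % d) % d + 1) % d := by
    intro i j
    have h1 : (i + (j+1) % d) % d + 1 ≡ (i + (j+1) % d) + 1 [MOD d] :=
      Nat.ModEq.add_right _ (Nat.mod_modEq _ _)
    have h2 : (i + (j+1) % d) + 1 ≡ (i + (j+1)) + 1 [MOD d] :=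
      Nat.ModEq.add_right _ (Nat.ModEq.add_left _ (Nat.mod_modEq _ _))
    have h3 : (i + (j+1)) + 1 = (i+1) + (j+1) := by omega
    exact (h3 ▸ (h1.trans h2)).symm
  set m : ℝ := ⨅ j : Fin d, ‖lam - θ ^ ((j : ℕ) + 1) * mu‖ with hm
  have bddm : BddBelow (Set.range fun j : Fin d => ‖lam - θ ^ ((j : ℕ) + 1) * mu‖) := by
    refine ⟨0, ?_⟩; rintro x ⟨j, rfl⟩; positivity
  set F : Equiv.Perm (Fin d) → ℝ := fun σ => Real.sqrt ((1 / (d : ℝ)) * ∑ i : Fin d,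
        ‖θ ^ ((i : ℕ) + 1) * lam - θ ^ (((σ i : Fin d) : ℕ) + 1) * mu‖ ^ 2) with hF
  have bddF : BddBelow (Set.range F) := by
    refine ⟨0, ?_⟩; rintro x ⟨σ, rfl⟩; exact Real.sqrt_nonneg _
  have hm0 : 0 ≤ m := le_ciInf fun j => norm_nonneg _
  -- lower bound
  have hlow : ∀ σ : Equiv.Perm (Fin d), m ≤ F σ := by
    intro σ
    have hterm : ∀ i : Fin d, m ≤ ‖θ ^ ((i : ℕ) + 1) * lam -
        θ ^ (((σ i : Fin d) : ℕ) + 1) * mu‖ := by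
      intro i
      set k : ℕ := ((σ i : Fin d) : ℕ)
      have hk : k < d := (σ i).isLt
      set e : Fin d := ⟨(k + d - (i:ℕ) - 1) % d, Nat.mod_lt _ dpos⟩ with he
      have heq := hkey i e k (hmod1 (i:ℕ) k i.isLt)
      rw [heq]
      exact ciInf_le bddm e
    have hsum : (d : ℝ) * m ^ 2 ≤ ∑ i : Fin d,
        ‖θ ^ ((i : ℕ) + 1) * lam - θ ^ (((σ i : Fin d) : ℕ) + 1) * mu‖ ^ 2 := by
      calc (d : ℝ) * m ^ 2 = ∑ _i : Fin d, m ^ 2 := by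
            rw [Finset.sum_const, Finset.card_univ, Fintype.card_fin, nsmul_eq_mul]
        _ ≤ _ := Finset.sum_le_sum fun i _ => by
            have := hterm i
            nlinarith [norm_nonneg (θ ^ ((i : ℕ) + 1) * lam -
              θ ^ (((σ i : Fin d) : ℕ) + 1) * mu)]
    have h1 : m ^ 2 ≤ (1 / (d : ℝ)) * ∑ i : Fin d,
        ‖θ ^ ((i : ℕ) + 1) * lam - θ ^ (((σ i : Fin d) : ℕ) + 1) * mu‖ ^ 2 := by
      rw [div_mul_eq_mul_div, le_div_iff₀ (by positivity : (0:ℝ) < (d:ℝ))]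
      linarith
    calc m = Real.sqrt (m ^ 2) := (Real.sqrt_sq hm0).symm
      _ ≤ F σ := Real.sqrt_le_sqrt h1
  -- upper bound
  have hup : ∀ j : Fin d, (⨅ σ, F σ) ≤ ‖lam - θ ^ ((j : ℕ) + 1) * mu‖ := by
    intro j
    set c : Fin d := ⟨((j:ℕ)+1) % d, Nat.mod_lt _ dpos⟩ with hc
    set σ : Equiv.Perm (Fin d) := Equiv.addRight c with hσ
    have hFσ : F σ = ‖lam - θ ^ ((j : ℕ) + 1) * mu‖ := by
      have hterm : ∀ i : Fin d, ‖θ ^ ((i : ℕ) + 1) * lam -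
          θ ^ (((σ i : Fin d) : ℕ) + 1) * mu‖ = ‖lam - θ ^ ((j : ℕ) + 1) * mu‖ := by
        intro i
        have hval : ((σ i : Fin d) : ℕ) = ((i:ℕ) + ((j:ℕ)+1) % d) % d := by
          simp [hσ, hc, Fin.add_def]
        rw [hval]
        exact hkey i j _ (by rw [← hmod2 (i:ℕ) (j:ℕ)])
      have hsum : (∑ i : Fin d, ‖θ ^ ((i : ℕ) + 1) * lam -
          θ ^ (((σ i : Fin d) : ℕ) + 1) * mu‖ ^ 2)
          = (d : ℝ) * ‖lam - θ ^ ((j : ℕ) + 1) * mu‖ ^ 2 := by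
        rw [Finset.sum_congr rfl (fun i _ => by rw [hterm i])]
        rw [Finset.sum_const, Finset.card_univ, Fintype.card_fin, nsmul_eq_mul]
      rw [hF]
      simp only [hsum]
      rw [show (1 / (d:ℝ)) * ((d:ℝ) * ‖lam - θ ^ ((j : ℕ) + 1) * mu‖ ^ 2)
          = ‖lam - θ ^ ((j : ℕ) + 1) * mu‖ ^ 2 by
        field_simp]
      exact Real.sqrt_sq (norm_nonneg _)
    calc (⨅ σ, F σ) ≤ F σ := ciInf_le bddF σ
      _ = _ := hFσ
  have heq : (⨅ σ, F σ) = m := by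
    apply le_antisymm
    · exact le_ciInf hup
    · exact le_ciInf hlow
  refine ⟨heq, ?_⟩
  rw [heq]
  have hlast : m ≤ ‖lam - θ ^ (((⟨d-1, by omega⟩ : Fin d) : ℕ) + 1) * mu‖ :=
    ciInf_le bddm _
  calc m ≤ _ := hlast
    _ = ‖lam - mu‖ := by
        have : (((⟨d-1, by omega⟩ : Fin d) : ℕ) + 1) = d := by simp; omega
        rw [this, hθd, one_mul]
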